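/- Let k ≥ 2 be a natural number and define g_k(x) = x^(16k)·(x-2k+1)^(16k)·∏_{i ∈ {0,...,2k-1} \ {k-1,k}} (x - i). Then for all real x ∈ [0, k-1] ∪ [k, 2k-1], |g_k(x)/g_k(k-1)| ≤ 1. -/

import Mathlib

noncomputable def gPoly (k : ℕ) (x : ℝ) : ℝ :=
  x ^ (16 * k) * (x - 2 * (k : ℝ) + 1) ^ (16 * k) *
    ∏ i ∈ Finset.range (2 * k) \ {k - 1, k}, (x - (i : ℝ))

-- L0 : pairing
lemma pairing (k : ℕ) (hk : 2 ≤ k) (h : ℕ → ℝ) :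
    ∏ i ∈ Finset.range (2*k) \ {k-1, k}, h i
      = ∏ i ∈ Finset.range (k-1), (h i * h (2*k-1-i)) := by
  have himg : ∏ i ∈ Finset.range (k-1), h (2*k-1-i)
      = ∏ j ∈ (Finset.range (k-1)).image (fun i => 2*k-1-i), h j := by
    rw [Finset.prod_image]
    intro a ha b hb hab
    simp only [Finset.mem_coe, Finset.coe_range, Set.mem_Iio, Finset.mem_range] at ha hb hab
    omega
  rw [Finset.prod_mul_distrib, himg, ← Finset.prod_union ?hdisj]
  case hdisj =>
    rw [Finset.disjoint_left]
    intro a ha hb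
    simp only [Finset.mem_range] at ha
    simp only [Finset.mem_image, Finset.mem_range] at hb
    obtain ⟨i, hi, hij⟩ := hb
    omega
  congr 1
  ext j
  simp only [Finset.mem_sdiff, Finset.mem_range, Finset.mem_union, Finset.mem_image,
    Finset.mem_insert, Finset.mem_singleton]
  constructor
  · rintro ⟨hj, hne⟩
    push_neg at hne
    rcases lt_or_ge j (k-1) with h1 | h1
    · exact Or.inl h1
    · exact Or.inr ⟨2*k-1-j, by omega, by omega⟩
  · rintro (h1 | ⟨i, hi, rfl⟩) <;> omega

-- L1 : symmetry
lemma gPoly_symm (k : ℕ) (hk : 2 ≤ k) (x : ℝ) :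
    gPoly k (2*(k:ℝ)-1-x) = gPoly k x := by
  have hev : Even (16*k) := ⟨8*k, by ring⟩
  unfold gPoly
  rw [pairing k hk, pairing k hk]
  have h1 : (2*(k:ℝ)-1-x) ^ (16*k) = (x - 2*(k:ℝ) + 1) ^ (16*k) := by
    rw [show (2*(k:ℝ)-1-x) = -(x - 2*(k:ℝ) + 1) by ring, hev.neg_pow]
  have h2 : (2*(k:ℝ)-1-x - 2*(k:ℝ) + 1) ^ (16*k) = x ^ (16*k) := by
    rw [show (2*(k:ℝ)-1-x - 2*(k:ℝ) + 1) = -x by ring, hev.neg_pow]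
  rw [h1, h2]
  have h3 : ∀ i ∈ Finset.range (k-1),
      ((2*(k:ℝ)-1-x) - (i:ℝ)) * ((2*(k:ℝ)-1-x) - ((2*k-1-i : ℕ):ℝ))
        = (x - (i:ℝ)) * (x - ((2*k-1-i : ℕ):ℝ)) := by
    intro i hi
    simp only [Finset.mem_range] at hi
    have hc : ((2*k-1-i : ℕ):ℝ) = 2*(k:ℝ)-1-(i:ℝ) := by
      rw [Nat.cast_sub (by omega : i ≤ 2*k-1), Nat.cast_sub (by omega : 1 ≤ 2*k)]
      push_cast; ring
    rw [hc]; ring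
  rw [Finset.prod_congr rfl h3]
  ring

-- L2 : shift identity
lemma shift_id (k : ℕ) (hk : 2 ≤ k) (x : ℝ) :
    (∏ i ∈ Finset.range (2*k) \ {k-1, k}, (x + 1 - (i:ℝ)))
        * ((x - ((k:ℝ)-2)) * (x - (2*(k:ℝ)-1)))
      = ((x+1) * (x - (k:ℝ))) * ∏ i ∈ Finset.range (2*k) \ {k-1, k}, (x - (i:ℝ)) := by
  set S := Finset.range (2*k) \ {k-1, k} with hSdef
  set C := Finset.range (2*k-1) \ {k-2, k-1, k} with hCdef
  have hE1 : ∏ i ∈ S, (x - (i:ℝ))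
      = (x - ((k-2:ℕ):ℝ)) * ((x - ((2*k-1:ℕ):ℝ)) * ∏ i ∈ C, (x - (i:ℝ))) := by
    have hS : S = insert (k-2) (insert (2*k-1) C) := by
      ext j
      simp only [hSdef, hCdef, Finset.mem_sdiff, Finset.mem_range, Finset.mem_insert,
        Finset.mem_singleton]
      omega
    rw [hS, Finset.prod_insert (by
        simp only [hCdef, Finset.mem_insert, Finset.mem_sdiff, Finset.mem_range,
          Finset.mem_singleton, true_or, not_true_eq_false, and_false, or_false,
          false_or, and_true, not_false_eq_true]
        omega),
      Finset.prod_insert (by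
        simp only [hCdef, Finset.mem_sdiff, Finset.mem_range, Finset.mem_insert,
          Finset.mem_singleton, true_or, not_true_eq_false, and_false, or_false,
          false_or, and_true, not_false_eq_true]
        omega)]
  have himg : ∏ j ∈ C.image (fun i : ℕ => i+1), (x + 1 - (j:ℝ)) = ∏ i ∈ C, (x - (i:ℝ)) := by
    rw [Finset.prod_image (fun a _ b _ h => by omega)]
    exact Finset.prod_congr rfl fun i _ => by push_cast; ring
  have hE2 : ∏ i ∈ S, (x + 1 - (i:ℝ))
      = (x + 1 - ((0:ℕ):ℝ)) * ((x + 1 - ((k+1:ℕ):ℝ)) * ∏ i ∈ C, (x - (i:ℝ))) := by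
    have hS : S = insert 0 (insert (k+1) (C.image (fun i : ℕ => i+1))) := by
      ext j
      simp only [hSdef, hCdef, Finset.mem_sdiff, Finset.mem_range, Finset.mem_insert,
        Finset.mem_singleton, Finset.mem_image]
      constructor
      · intro hj
        by_cases h0 : j = 0
        · exact Or.inl h0
        by_cases h1 : j = k+1
        · exact Or.inr (Or.inl h1)
        exact Or.inr (Or.inr ⟨j-1, by omega, by omega⟩)
      · rintro (rfl | rfl | ⟨i, hi, rfl⟩) <;> omega
    rw [hS, Finset.prod_insert (by
        simp only [Finset.mem_insert, Finset.mem_image, hCdef, Finset.mem_sdiff,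
          Finset.mem_range, Finset.mem_singleton]
        push_neg
        refine ⟨by omega, ?_⟩
        intro i hi
        omega),
      Finset.prod_insert (by
        simp only [Finset.mem_image, hCdef, Finset.mem_sdiff, Finset.mem_range,
          Finset.mem_insert, Finset.mem_singleton]
        push_neg
        intro i hi
        omega),
      himg]
  rw [hE1, hE2]
  have c1 : ((k-2:ℕ):ℝ) = (k:ℝ)-2 := by
    rw [Nat.cast_sub (by omega : 2 ≤ k)]; norm_num
  have c2 : ((2*k-1:ℕ):ℝ) = 2*(k:ℝ)-1 := by
    rw [Nat.cast_sub (by omega : 1 ≤ 2*k)]; push_cast; ring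
  rw [c1, c2]
  push_cast
  ring

-- L3 : key analytic inequality
lemma key_ineq (k : ℕ) (hk : 2 ≤ k) (x : ℝ) (hx0 : 0 < x) (hx1 : x ≤ (k:ℝ)-2) :
    (x*(2*(k:ℝ)-1-x))^(16*k) * ((((k:ℝ)-2-x)) * (2*(k:ℝ)-1-x))
      ≤ ((x+1)*(2*(k:ℝ)-2-x))^(16*k) * ((x+1) * ((k:ℝ)-x)) := by
  have hk2 : (2:ℝ) ≤ (k:ℝ) := by exact_mod_cast hk
  set Q := x*(2*(k:ℝ)-1-x) with hQ
  set P := (x+1)*(2*(k:ℝ)-2-x) with hPd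
  set d := (k:ℝ)-1-x with hd
  have hd1 : 1 ≤ d := by rw [hd]; linarith
  have hQpos : 0 < Q := by
    rw [hQ]; apply mul_pos hx0; linarith
  have hPQ : P = Q + 2*d := by rw [hPd, hQ, hd]; ring
  set r := 2*d/Q with hr
  have hrQ : Q * r = 2*d := by
    rw [hr]; field_simp
  have hr0 : 0 ≤ r := by
    rw [hr]; positivity
  have hbern : 1 + ((16*k : ℕ):ℝ) * r ≤ (1+r)^(16*k) :=
    one_add_mul_le_pow (by linarith) (16*k)
  have hcast : ((16*k : ℕ):ℝ) = 16*(k:ℝ) := by push_cast; ring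
  rw [hcast] at hbern
  have hQP : Q*(1+r) = P := by
    rw [mul_add, mul_one, hrQ, hPQ]
  have hkd : (k:ℝ) - d = x + 1 := by rw [hd]; ring
  have h2 : Q ≤ 16*(k:ℝ)*((k:ℝ)-d) := by
    rw [hQ, hkd]
    nlinarith
  have h3 : 2*d ≤ 16*(k:ℝ)*r*((k:ℝ)-d) := by
    calc 2*d = Q*r := hrQ.symm
      _ ≤ (16*(k:ℝ)*((k:ℝ)-d))*r := mul_le_mul_of_nonneg_right h2 hr0
      _ = 16*(k:ℝ)*r*((k:ℝ)-d) := by ring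
  have h1 : (d-1)*((k:ℝ)+d) ≤ (1+16*(k:ℝ)*r)*(((k:ℝ)-d)*(d+1)) := by
    nlinarith [mul_le_mul_of_nonneg_right h3 (show (0:ℝ) ≤ d+1 by linarith)]
  have hQn : (0:ℝ) ≤ Q^(16*k) := by positivity
  have hkd0 : (0:ℝ) ≤ ((k:ℝ)-d)*(d+1) := by
    rw [hkd]; nlinarith
  have hpow : Q^(16*k) * ((d-1)*((k:ℝ)+d)) ≤ P^(16*k) * (((k:ℝ)-d)*(d+1)) := by
    calc Q^(16*k) * ((d-1)*((k:ℝ)+d))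
        ≤ Q^(16*k) * ((1+16*(k:ℝ)*r)*(((k:ℝ)-d)*(d+1))) :=
          mul_le_mul_of_nonneg_left h1 hQn
      _ ≤ Q^(16*k) * ((1+r)^(16*k)*(((k:ℝ)-d)*(d+1))) :=
          mul_le_mul_of_nonneg_left
            (mul_le_mul_of_nonneg_right hbern hkd0) hQn
      _ = (Q*(1+r))^(16*k) * (((k:ℝ)-d)*(d+1)) := by rw [mul_pow Q (1+r) (16*k), mul_assoc (Q^(16*k))]
      _ = P^(16*k) * (((k:ℝ)-d)*(d+1)) := by rw [hQP]
  have e1 : ((k:ℝ)-2-x)*(2*(k:ℝ)-1-x) = (d-1)*((k:ℝ)+d) := by rw [hd]; ring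
  have e2 : (x+1)*((k:ℝ)-x) = ((k:ℝ)-d)*(d+1) := by rw [hd]; ring
  rw [e1, e2]
  exact hpow

-- L4 : step
lemma step (k : ℕ) (hk : 2 ≤ k) (x : ℝ) (hx0 : 0 ≤ x) (hx1 : x ≤ (k:ℝ)-2) :
    |gPoly k x| ≤ |gPoly k (x+1)| := by
  have hk2 : (2:ℝ) ≤ (k:ℝ) := by exact_mod_cast hk
  rcases hx0.eq_or_lt with heq | hx0'
  · have hz : gPoly k x = 0 := by
      rw [← heq]
      unfold gPoly
      rw [zero_pow (by positivity : 16*k ≠ 0)]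
      ring
    rw [hz, abs_zero]
    exact abs_nonneg _
  rcases eq_or_lt_of_le hx1 with heq2 | hx1'
  · have hz : gPoly k x = 0 := by
      unfold gPoly
      apply mul_eq_zero_of_right
      apply Finset.prod_eq_zero (i := k-2)
      · simp only [Finset.mem_sdiff, Finset.mem_range, Finset.mem_insert,
          Finset.mem_singleton]
        omega
      · rw [heq2, Nat.cast_sub (by omega : 2 ≤ k)]
        push_cast; ring
    rw [hz, abs_zero]
    exact abs_nonneg _
  · have E : gPoly k (x+1) *
        (((x - ((k:ℝ)-2)) * (x - (2*(k:ℝ)-1))) * (x^(16*k) * (x - 2*(k:ℝ)+1)^(16*k)))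
        = gPoly k x *
        (((x+1)*(x-(k:ℝ))) * ((x+1)^(16*k) * (x + 1 - 2*(k:ℝ) + 1)^(16*k))) := by
      have hs := shift_id k hk x
      unfold gPoly
      linear_combination ((x+1)^(16*k) * (x + 1 - 2*(k:ℝ) + 1)^(16*k)
        * (x^(16*k) * (x - 2*(k:ℝ)+1)^(16*k))) * hs
    have habs := congrArg (fun t => |t|) E
    simp only [abs_mul, abs_pow] at habs
    rw [show |x - ((k:ℝ)-2)| = (k:ℝ)-2-x by rw [abs_sub_comm]; exact abs_of_pos (by linarith),
      show |x - (2*(k:ℝ)-1)| = 2*(k:ℝ)-1-x by rw [abs_sub_comm]; exact abs_of_pos (by linarith),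
      show |x| = x from abs_of_pos hx0',
      show |x - 2*(k:ℝ)+1| = 2*(k:ℝ)-1-x by
        rw [show x - 2*(k:ℝ)+1 = -(2*(k:ℝ)-1-x) by ring, abs_neg]
        exact abs_of_pos (by linarith),
      show |x - (k:ℝ)| = (k:ℝ)-x by rw [abs_sub_comm]; exact abs_of_pos (by linarith),
      show |x+1| = x+1 from abs_of_pos (by linarith),
      show |x + 1 - 2*(k:ℝ) + 1| = 2*(k:ℝ)-2-x by
        rw [show x + 1 - 2*(k:ℝ) + 1 = -(2*(k:ℝ)-2-x) by ring, abs_neg]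
        exact abs_of_pos (by linarith)] at habs
    have hA := key_ineq k hk x hx0' (le_of_lt hx1')
    rw [mul_pow, mul_pow] at hA
    have h1 : (0:ℝ) < (k:ℝ)-2-x := by linarith
    have h2 : (0:ℝ) < 2*(k:ℝ)-1-x := by linarith
    have hAB : ((k:ℝ)-2-x)*(2*(k:ℝ)-1-x)*(x^(16*k)*(2*(k:ℝ)-1-x)^(16*k))
        ≤ (x+1)*((k:ℝ)-x)*((x+1)^(16*k)*(2*(k:ℝ)-2-x)^(16*k)) := by
      nlinarith [hA]
    have hApos : (0:ℝ) < ((k:ℝ)-2-x)*(2*(k:ℝ)-1-x)*(x^(16*k)*(2*(k:ℝ)-1-x)^(16*k)) :=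
      mul_pos (mul_pos h1 h2) (mul_pos (pow_pos hx0' _) (pow_pos h2 _))
    have h5 := mul_le_mul_of_nonneg_left hAB (abs_nonneg (gPoly k x))
    rw [← habs] at h5
    exact le_of_mul_le_mul_right h5 hApos

-- abs formula near the top
lemma abs_g (k : ℕ) (hk : 2 ≤ k) (x : ℝ) (hx : (k:ℝ)-2 ≤ x) (hx' : x ≤ (k:ℝ)-1) :
    |gPoly k x| = (x*(2*(k:ℝ)-1-x))^(16*k)
      * ∏ i ∈ Finset.range (k-1), ((x - (i:ℝ))*((2*(k:ℝ)-1-(i:ℝ)) - x)) := by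
  have hk2 : (2:ℝ) ≤ (k:ℝ) := by exact_mod_cast hk
  have hx0 : 0 ≤ x := by linarith
  unfold gPoly
  rw [pairing k hk, abs_mul, abs_mul, abs_pow, abs_pow, Finset.abs_prod,
    abs_of_nonneg hx0,
    show |x - 2*(k:ℝ)+1| = 2*(k:ℝ)-1-x by
      rw [show x - 2*(k:ℝ)+1 = -(2*(k:ℝ)-1-x) by ring, abs_neg]
      exact abs_of_nonneg (by linarith)]
  rw [← mul_pow]
  congr 1
  refine Finset.prod_congr rfl fun i hi => ?_
  simp only [Finset.mem_range] at hi
  have hc : ((2*k-1-i : ℕ):ℝ) = 2*(k:ℝ)-1-(i:ℝ) := by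
    rw [Nat.cast_sub (by omega : i ≤ 2*k-1), Nat.cast_sub (by omega : 1 ≤ 2*k)]
    push_cast; ring
  have hik : (i:ℝ) ≤ (k:ℝ)-2 := by
    have h1 : ((i:ℕ):ℝ) ≤ ((k-2:ℕ):ℝ) := by exact_mod_cast (by omega : i ≤ k-2)
    rwa [Nat.cast_sub (by omega : 2 ≤ k)] at h1
  rw [hc, abs_mul,
    abs_of_nonneg (by linarith : (0:ℝ) ≤ x - (i:ℝ)),
    show |x - (2*(k:ℝ)-1-(i:ℝ))| = (2*(k:ℝ)-1-(i:ℝ)) - x by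
      rw [abs_sub_comm]
      exact abs_of_nonneg (by linarith)]

-- L5 : monotone on [k-2,k-1]
lemma mono_top (k : ℕ) (hk : 2 ≤ k) (x y : ℝ) (hx : (k:ℝ)-2 ≤ x) (hxy : x ≤ y)
    (hy : y ≤ (k:ℝ)-1) : |gPoly k x| ≤ |gPoly k y| := by
  have hk2 : (2:ℝ) ≤ (k:ℝ) := by exact_mod_cast hk
  rw [abs_g k hk x hx (by linarith), abs_g k hk y (by linarith) hy]
  have h1 : (0:ℝ) ≤ x*(2*(k:ℝ)-1-x) := by nlinarith
  refine mul_le_mul (pow_le_pow_left₀ h1 (by nlinarith) _) ?_ ?_ (pow_nonneg (by nlinarith) _)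
  · refine Finset.prod_le_prod (fun i hi => ?_) (fun i hi => ?_)
    all_goals {
      simp only [Finset.mem_range] at hi
      have hik : (i:ℝ) ≤ (k:ℝ)-2 := by
        have h2 : ((i:ℕ):ℝ) ≤ ((k-2:ℕ):ℝ) := by exact_mod_cast (by omega : i ≤ k-2)
        rwa [Nat.cast_sub (by omega : 2 ≤ k)] at h2
      nlinarith }
  · refine Finset.prod_nonneg fun i hi => ?_
    simp only [Finset.mem_range] at hi
    have hik : (i:ℝ) ≤ (k:ℝ)-2 := by
      have h2 : ((i:ℕ):ℝ) ≤ ((k-2:ℕ):ℝ) := by exact_mod_cast (by omega : i ≤ k-2)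
      rwa [Nat.cast_sub (by omega : 2 ≤ k)] at h2
    nlinarith

-- L6 : full left interval
lemma left_bound (k : ℕ) (hk : 2 ≤ k) (x : ℝ) (hx0 : 0 ≤ x) (hx1 : x ≤ (k:ℝ)-1) :
    |gPoly k x| ≤ |gPoly k ((k:ℝ)-1)| := by
  have hk2 : (2:ℝ) ≤ (k:ℝ) := by exact_mod_cast hk
  have main : ∀ n : ℕ, ∀ y : ℝ, 0 ≤ y → y ≤ (k:ℝ)-1 → (k:ℝ)-1 - y ≤ n+1 →
      |gPoly k y| ≤ |gPoly k ((k:ℝ)-1)| := by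
    intro n
    induction n with
    | zero =>
      intro y h0 h1 h2
      push_cast at h2
      exact mono_top k hk y ((k:ℝ)-1) (by linarith) h1 le_rfl
    | succ m ih =>
      intro y h0 h1 h2
      push_cast at h2
      by_cases hc : (k:ℝ)-1-y ≤ m+1
      · exact ih y h0 h1 (by linarith)
      · push_neg at hc
        have hstep := step k hk y h0 (by linarith : y ≤ (k:ℝ)-2)
        exact hstep.trans (ih (y+1) (by linarith) (by linarith) (by linarith))
  obtain ⟨n, hn⟩ := exists_nat_ge ((k:ℝ)-1-x)
  exact main n x hx0 hx1 (by linarith)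

lemma g_ne (k : ℕ) (hk : 2 ≤ k) : gPoly k ((k:ℝ)-1) ≠ 0 := by
  have hk2 : (2:ℝ) ≤ (k:ℝ) := by exact_mod_cast hk
  unfold gPoly
  refine mul_ne_zero (mul_ne_zero ?_ ?_) ?_
  · exact pow_ne_zero _ (by linarith)
  · exact pow_ne_zero _ (by intro h; nlinarith [h] )
  · rw [Finset.prod_ne_zero_iff]
    intro i hi
    simp only [Finset.mem_sdiff, Finset.mem_range, Finset.mem_insert,
      Finset.mem_singleton] at hi
    have : ((k:ℝ)-1) = ((k-1:ℕ):ℝ) := by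
      rw [Nat.cast_sub (by omega : 1 ≤ k)]; norm_num
    rw [this]
    intro h
    have h2 := sub_eq_zero.mp h
    have h3 : i = k-1 := by exact_mod_cast h2.symm
    exact hi.2 (Or.inl h3)

theorem stmt_7 (k : ℕ) (hk : 2 ≤ k) (x : ℝ)
    (hx : x ∈ Set.Icc (0 : ℝ) ((k : ℝ) - 1) ∪ Set.Icc (k : ℝ) (2 * (k : ℝ) - 1)) :
    |gPoly k x / gPoly k ((k : ℝ) - 1)| ≤ 1 := by
  have hk2 : (2:ℝ) ≤ (k:ℝ) := by exact_mod_cast hk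
  rw [abs_div, div_le_one (abs_pos.2 (g_ne k hk))]
  rcases hx with ⟨h0, h1⟩ | ⟨h0, h1⟩
  · exact left_bound k hk x h0 h1
  · have key : gPoly k x = gPoly k (2*(k:ℝ)-1-x) := by
      have := gPoly_symm k hk (2*(k:ℝ)-1-x)
      rw [show 2*(k:ℝ)-1-(2*(k:ℝ)-1-x) = x by ring] at this
      exact this
    rw [key]
    exact left_bound k hk _ (by linarith) (by linarith)
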